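/- Let f_1,…,f_m ∈ ℝ[x_1,…,x_n] satisfy the regularity hypothesis, and let ℳ ⊆ ℝⁿ be a finite set such that ℳ ∩ cl(C) ≠ ∅ for every connected component C of the realization of each feasible sign condition over f_1,…,f_m (cl denoting Euclidean closure). For z ∈ ℝⁿ let σ(z) ∈ {<,=,>}^m be the sign condition with f_i(z) σ(z)_i 0 for all i, and for σ ∈ {<,=,>}^m let P_σ be the set of all σ̂ ∈ {<,=,>}^m such that σ̂_i = σ_i for every i with σ_i ≠ '='. Then a sign condition σ̂ ∈ {<,=,>}^m is feasible if and only if σ̂ ∈ P_{σ(z)} for some z ∈ ℳ; that is, the set of all feasible sign conditions over f_1,…,f_m equals ⋃_{z ∈ ℳ} P_{σ(z)}. -/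

import Mathlib

open MvPolynomial Set Topology Filter

/-- A sign symbol among `<, =, >`. -/
inductive Sign3 | lt | eq | gt
deriving DecidableEq

/-- The relation "`t σ 0`" for a sign symbol `σ`. -/
def Sign3.holds : Sign3 → ℝ → Prop
  | .lt, t => t < 0
  | .eq, t => t = 0
  | .gt, t => 0 < t

/-- The sign of a real number, as a sign symbol. -/
noncomputable def signOf (t : ℝ) : Sign3 :=
  if t < 0 then Sign3.lt else if t = 0 then Sign3.eq else Sign3.gt

/-- The regularity hypothesis: for every `x ∈ ℂⁿ` and every subset `S` of the indices,
if all `f_i`, `i ∈ S`, vanish at `x`, then their gradients at `x` are linearly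
independent over `ℂ`. -/
def RegHyp {n m : ℕ} (f : Fin m → MvPolynomial (Fin n) ℝ) : Prop :=
  ∀ (x : Fin n → ℂ) (S : Set (Fin m)),
    (∀ i ∈ S, eval x ((f i).map (algebraMap ℝ ℂ)) = 0) →
    LinearIndependent ℂ
      (fun i : S => fun k : Fin n => eval x (pderiv k ((f i.1).map (algebraMap ℝ ℂ))))

/-- The realization of a sign condition `σ` over the family `f`. -/
def realization {n m : ℕ} (f : Fin m → MvPolynomial (Fin n) ℝ) (σ : Fin m → Sign3) :
    Set (Fin n → ℝ) :=
  {x | ∀ i, (σ i).holds (eval x (f i))}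

noncomputable def gradCLM {n : ℕ} (p : MvPolynomial (Fin n) ℝ) (z : Fin n → ℝ) :
    (Fin n → ℝ) →L[ℝ] ℝ :=
  ∑ k : Fin n, eval z (pderiv k p) • (ContinuousLinearMap.proj k : (Fin n → ℝ) →L[ℝ] ℝ)

lemma gradCLM_apply {n : ℕ} (p : MvPolynomial (Fin n) ℝ) (z v : Fin n → ℝ) :
    gradCLM p z v = ∑ k : Fin n, eval z (pderiv k p) * v k := by
  simp [gradCLM]

lemma hasStrictFDerivAt_eval {n : ℕ} (p : MvPolynomial (Fin n) ℝ) (z : Fin n → ℝ) :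
    HasStrictFDerivAt (fun x => eval x p) (gradCLM p z) z := by
  induction p using MvPolynomial.induction_on with
  | C a =>
      have h0 : gradCLM (C a : MvPolynomial (Fin n) ℝ) z = 0 := by simp [gradCLM]
      rw [h0]
      exact (hasStrictFDerivAt_const a z).congr_of_eventuallyEq (.of_forall fun x => by simp)
  | add p q hp hq =>
      have h0 : gradCLM (p + q) z = gradCLM p z + gradCLM q z := by
        simp [gradCLM, add_smul, Finset.sum_add_distrib]
      rw [h0]
      exact (hp.add hq).congr_of_eventuallyEq (.of_forall fun x => by simp)
  | mul_X p i hp =>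
      have hproj : HasStrictFDerivAt (fun x : Fin n → ℝ => x i)
          (ContinuousLinearMap.proj i : (Fin n → ℝ) →L[ℝ] ℝ) z :=
        (ContinuousLinearMap.proj i : (Fin n → ℝ) →L[ℝ] ℝ).hasStrictFDerivAt
      have h := hp.mul hproj
      have heq : gradCLM (p * X i) z =
          eval z p • (ContinuousLinearMap.proj i : (Fin n → ℝ) →L[ℝ] ℝ)
            + z i • gradCLM p z := by
        ext v
        simp only [ContinuousLinearMap.add_apply, ContinuousLinearMap.smul_apply,
          ContinuousLinearMap.proj_apply, gradCLM_apply, smul_eq_mul]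
        rw [Finset.mul_sum]
        have h1 : ∀ k : Fin n, eval z (pderiv k (p * X i)) * v k =
            (if k = i then eval z p * v k else 0) + z i * (eval z (pderiv k p) * v k) := by
          intro k
          rcases eq_or_ne k i with rfl | hk
          · simp [pderiv_mul, pderiv_X_self]; ring
          · simp [pderiv_mul, pderiv_X, Pi.single_eq_of_ne hk.symm, if_neg hk]; ring
        rw [Finset.sum_congr rfl fun k _ => h1 k, Finset.sum_add_distrib,
          Finset.sum_ite_eq' Finset.univ i (fun k => eval z p * v k)]
        simp
      rw [heq]
      exact h.congr_of_eventuallyEq (.of_forall fun x => by simp)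

lemma continuous_evalP {n : ℕ} (p : MvPolynomial (Fin n) ℝ) :
    Continuous (fun x : Fin n → ℝ => eval x p) :=
  continuous_iff_continuousAt.2 fun z => (hasStrictFDerivAt_eval p z).continuousAt

lemma linind_real_of_complex {ι : Type*} {n : ℕ} (g : ι → Fin n → ℝ)
    (h : LinearIndependent ℂ (fun i => fun k => ((g i k : ℝ) : ℂ))) :
    LinearIndependent ℝ g := by
  rw [linearIndependent_iff'] at h ⊢
  intro t c hc i hi
  have h2 : ∑ j ∈ t, (c j : ℂ) • (fun k => ((g j k : ℝ) : ℂ)) = 0 := by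
    funext k
    have := congrFun hc k
    simp only [Finset.sum_apply, Pi.smul_apply, smul_eq_mul, Pi.zero_apply] at this ⊢
    exact_mod_cast congrArg (fun t : ℝ => (t : ℂ)) this
  exact_mod_cast h t (fun j => (c j : ℂ)) h2 i hi

lemma surj_of_linind {ι : Type*} [Fintype ι] {n : ℕ} (g : ι → Fin n → ℝ)
    (hg : LinearIndependent ℝ g) :
    Function.Surjective (fun (x : Fin n → ℝ) (i : ι) => ∑ k : Fin n, g i k * x k) := by
  classical
  let T : (Fin n → ℝ) →ₗ[ℝ] (ι → ℝ) :=
    LinearMap.pi fun i =>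
      { toFun := fun x => ∑ k : Fin n, g i k * x k
        map_add' := by intro a b; simp [mul_add, Finset.sum_add_distrib]
        map_smul' := by
          intro c a
          simp only [smul_eq_mul, RingHom.id_apply, Pi.smul_apply, Finset.mul_sum]
          exact Finset.sum_congr rfl fun k _ => by ring }
  have hsurj : Function.Surjective T := by
    rw [← LinearMap.dualMap_injective_iff]
    rw [injective_iff_map_eq_zero]
    intro ψ hψ
    have hev : ∀ x : Fin n → ℝ, ψ (T x) = 0 :=
      fun x => congrFun (congrArg DFunLike.coe hψ) x
    set c : ι → ℝ := fun i => ψ (Pi.single i 1) with hcdef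
    have hψv : ∀ v : ι → ℝ, ψ v = ∑ i : ι, v i * c i := by
      intro v
      conv_lhs => rw [← Finset.univ_sum_single v]
      rw [map_sum]
      refine Finset.sum_congr rfl fun i _ => ?_
      have : (Pi.single i (v i) : ι → ℝ) = v i • (Pi.single i (1 : ℝ) : ι → ℝ) := by
        rw [← Pi.single_smul]; simp
      rw [this, map_smul, smul_eq_mul]
    have hc0 : ∀ i, c i = 0 := by
      have hsum : ∑ i ∈ Finset.univ, c i • g i = 0 := by
        funext k
        have := hev (Pi.single k 1)
        rw [hψv] at this
        simp only [Finset.sum_apply, Pi.smul_apply, smul_eq_mul, Pi.zero_apply]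
        rw [← this]
        refine Finset.sum_congr rfl fun i _ => ?_
        simp [T, Pi.single_apply, mul_comm]
      intro i
      exact linearIndependent_iff'.1 hg Finset.univ c hsum i (Finset.mem_univ i)
    refine LinearMap.ext fun v => ?_
    rw [LinearMap.zero_apply, hψv]
    simp [hc0]
  exact hsurj

lemma eval_map_ofReal {n : ℕ} (p : MvPolynomial (Fin n) ℝ) (z : Fin n → ℝ) :
    eval (fun k => (z k : ℂ)) (p.map (algebraMap ℝ ℂ)) = ((eval z p : ℝ) : ℂ) := by
  rw [eval_map]
  have h := MvPolynomial.eval₂_comp_left (algebraMap ℝ ℂ) (RingHom.id ℝ) z p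
  simp only [eval₂_id, RingHom.comp_id] at h
  simpa [Function.comp_def, Complex.coe_algebraMap] using h.symm

lemma signOf_of_neg {t : ℝ} (h : t < 0) : signOf t = Sign3.lt := by simp [signOf, h]
lemma signOf_of_zero {t : ℝ} (h : t = 0) : signOf t = Sign3.eq := by
  simp [signOf, h]
lemma signOf_of_pos {t : ℝ} (h : 0 < t) : signOf t = Sign3.gt := by
  simp [signOf, not_lt.2 h.le, h.ne']

lemma signOf_ne_eq {t : ℝ} (h : signOf t ≠ Sign3.eq) : t ≠ 0 :=
  fun h0 => h (signOf_of_zero h0)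

theorem statement5 (n m : ℕ) (f : Fin m → MvPolynomial (Fin n) ℝ) (hreg : RegHyp f)
    (M : Set (Fin n → ℝ)) (hMfin : M.Finite)
    (hM : ∀ σ : Fin m → Sign3, ∀ x₀ ∈ realization f σ,
      (M ∩ closure (connectedComponentIn (realization f σ) x₀)).Nonempty) :
    ∀ σ' : Fin m → Sign3,
      (realization f σ').Nonempty ↔
        ∃ z ∈ M, ∀ i : Fin m,
          signOf (eval z (f i)) ≠ Sign3.eq → σ' i = signOf (eval z (f i)) := by
  intro σ'
  constructor
  · rintro ⟨x₀, hx₀⟩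
    obtain ⟨z, hzM, hzc⟩ := hM σ' x₀ hx₀
    refine ⟨z, hzM, fun i hi => ?_⟩
    have hcl : z ∈ closure (realization f σ') :=
      closure_mono (connectedComponentIn_subset _ _) hzc
    have hne : eval z (f i) ≠ 0 := signOf_ne_eq hi
    cases hσ : σ' i with
    | lt =>
        have hsub : realization f σ' ⊆ {x | eval x (f i) ≤ 0} := by
          intro x hx
          have := hx i
          rw [hσ] at this
          exact le_of_lt this
        have hle : eval z (f i) ≤ 0 :=
          closure_minimal hsub (isClosed_le (continuous_evalP (f i)) continuous_const) hcl
        rw [signOf_of_neg (lt_of_le_of_ne hle hne)]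
    | eq =>
        have hsub : realization f σ' ⊆ {x | eval x (f i) = 0} := by
          intro x hx
          have := hx i
          rw [hσ] at this
          exact this
        have h0 : eval z (f i) = 0 :=
          closure_minimal hsub (isClosed_eq (continuous_evalP (f i)) continuous_const) hcl
        exact absurd h0 hne
    | gt =>
        have hsub : realization f σ' ⊆ {x | 0 ≤ eval x (f i)} := by
          intro x hx
          have := hx i
          rw [hσ] at this
          exact le_of_lt this
        have hle : 0 ≤ eval z (f i) :=
          closure_minimal hsub (isClosed_le continuous_const (continuous_evalP (f i))) hcl
        rw [signOf_of_pos (lt_of_le_of_ne hle (Ne.symm hne))]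
  · rintro ⟨z, _hzM, hz⟩
    classical
    set s : Set (Fin m) := {i | eval z (f i) = 0} with hsdef
    haveI : Fintype s := Fintype.ofFinite _
    have hz0 : ∀ i ∈ s, eval (fun k => (z k : ℂ)) ((f i).map (algebraMap ℝ ℂ)) = 0 := by
      intro i hi
      rw [eval_map_ofReal]
      exact_mod_cast hi
    have hC := hreg (fun k => (z k : ℂ)) s hz0
    have hR : LinearIndependent ℝ
        (fun i : s => fun k : Fin n => eval z (pderiv k (f i.1))) := by
      apply linind_real_of_complex
      have heq : (fun i : s => fun k : Fin n => ((eval z (pderiv k (f i.1)) : ℝ) : ℂ)) =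
          fun i : s => fun k : Fin n =>
            eval (fun k => (z k : ℂ)) (pderiv k ((f i.1).map (algebraMap ℝ ℂ))) := by
        funext i k
        rw [pderiv_map, eval_map_ofReal]
      rw [heq]
      exact hC
    have hsurj := surj_of_linind _ hR
    set F : (Fin n → ℝ) → (s → ℝ) := fun x i => eval x (f i.1) with hFdef
    have hF : HasStrictFDerivAt F
        (ContinuousLinearMap.pi fun i : s => gradCLM (f i.1) z) z :=
      hasStrictFDerivAt_pi.2 fun i => hasStrictFDerivAt_eval (f i.1) z
    have hrange : LinearMap.range
        ((ContinuousLinearMap.pi fun i : s => gradCLM (f i.1) z : (Fin n → ℝ) →L[ℝ] (s → ℝ)) : (Fin n → ℝ) →ₗ[ℝ] (s → ℝ)) = ⊤ := by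
      rw [LinearMap.range_eq_top]
      intro y
      obtain ⟨x, hx⟩ := hsurj y
      refine ⟨x, ?_⟩
      funext i
      simpa [ContinuousLinearMap.pi_apply, gradCLM_apply] using congrFun hx i
    have hmap := hF.map_nhds_eq_of_surj hrange
    have hEi : ∀ i : Fin m, ∀ᶠ x in 𝓝 z,
        eval z (f i) ≠ 0 → (signOf (eval z (f i))).holds (eval x (f i)) := by
      intro i
      rcases lt_trichotomy (eval z (f i)) 0 with h | h | h
      · have hev : ∀ᶠ x in 𝓝 z, eval x (f i) < 0 :=
          (continuous_evalP (f i)).continuousAt (Iio_mem_nhds h)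
        filter_upwards [hev] with x hx _
        rw [signOf_of_neg h]
        exact hx
      · filter_upwards with x hx
        exact absurd h hx
      · have hev : ∀ᶠ x in 𝓝 z, 0 < eval x (f i) :=
          (continuous_evalP (f i)).continuousAt (Ioi_mem_nhds h)
        filter_upwards [hev] with x hx _
        rw [signOf_of_pos h]
        exact hx
    have hE : {x : Fin n → ℝ | ∀ i : Fin m,
        eval z (f i) ≠ 0 → (signOf (eval z (f i))).holds (eval x (f i))} ∈ 𝓝 z :=
      Filter.eventually_all.2 hEi
    have himg : F '' {x : Fin n → ℝ | ∀ i : Fin m,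
        eval z (f i) ≠ 0 → (signOf (eval z (f i))).holds (eval x (f i))} ∈ 𝓝 (F z) := by
      rw [← hmap]
      exact Filter.image_mem_map hE
    have hFz : F z = 0 := by
      funext i
      exact i.2
    rw [hFz] at himg
    obtain ⟨ε, εpos, hball⟩ := Metric.mem_nhds_iff.1 himg
    set v : s → ℝ := fun i =>
      match σ' i.1 with
      | Sign3.lt => -(ε / 2)
      | Sign3.eq => 0
      | Sign3.gt => ε / 2 with hvdef
    have hvmem : v ∈ Metric.ball (0 : s → ℝ) ε := by
      rw [Metric.mem_ball, dist_zero_right]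
      refine lt_of_le_of_lt (a := ‖v‖) (b := ε / 2) ?_ (half_lt_self εpos)
      refine (pi_norm_le_iff_of_nonneg (by positivity)).2 fun i => ?_
      rw [Real.norm_eq_abs]
      cases hσ : σ' i.1 <;>
        simp [hvdef, hσ, abs_of_nonneg (by positivity : (0:ℝ) ≤ ε / 2), le_of_lt εpos] <;> positivity
    obtain ⟨x, hxE, hFx⟩ := hball hvmem
    refine ⟨x, fun i => ?_⟩
    by_cases hzi : eval z (f i) = 0
    · have hxv : eval x (f i) = v ⟨i, hzi⟩ := congrFun hFx ⟨i, hzi⟩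
      cases hσ : σ' i with
      | lt =>
          show eval x (f i) < 0
          rw [hxv, hvdef]
          simp only [hσ]
          linarith
      | eq =>
          show eval x (f i) = 0
          rw [hxv, hvdef]
          simp only [hσ]
      | gt =>
          show 0 < eval x (f i)
          rw [hxv, hvdef]
          simp only [hσ]
          linarith
    · have h1 := hxE i hzi
      have h2 : σ' i = signOf (eval z (f i)) := by
        apply hz i
        intro hcontra
        rcases lt_trichotomy (eval z (f i)) 0 with h | h | h
        · rw [signOf_of_neg h] at hcontra; exact Sign3.noConfusion hcontra
        · exact hzi h
        · rw [signOf_of_pos h] at hcontra; exact Sign3.noConfusion hcontra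
      rw [h2]
      exact h1
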